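/- Let L ≥ 2, let τ : ℝ → ℝ satisfy |τ(x)| ≤ C_σ and |τ(x) − τ(y)| ≤ L_σ |x − y| for all x, y, let P_in, P_bd ∈ ℝ^{n×n} with ‖P_in‖_F + ‖P_bd‖_F ≤ B_P and P = P_in + P_bd, and let W^(ℓ), W'^(ℓ) ∈ ℝ^{d_{ℓ-1}×d_ℓ} with ‖W^(ℓ)‖_F, ‖W'^(ℓ)‖_F ≤ B_W and ‖W^(ℓ) − W'^(ℓ)‖_F ≤ B_{ΔW}. Suppose: (i) the exact backward pass satisfies J^(ℓ-1) = Pᵀ (J^(ℓ) ∘ τ(Z^(ℓ))) (W^(ℓ))ᵀ for ℓ = L,…,2; (ii) the stale backward pass satisfies J̃^(ℓ-1) = P_inᵀ M̃^(ℓ) (W^(ℓ))ᵀ + P_bdᵀ M̃'^(ℓ) (W'^(ℓ))ᵀ for ℓ = L,…,2, where M̃^(ℓ) = J̃^(ℓ) ∘ τ(Z̃^(ℓ)); (iii) ‖J̃^(L) − J^(L)‖_F ≤ L_loss E_H; (iv) ‖Z̃^(ℓ) − Z^(ℓ)‖_F ≤ E_Z, ‖J̃^(ℓ)‖_F ≤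 B_J, ‖M̃'^(ℓ)‖_F ≤ B_M, and ‖M̃^(ℓ) − M̃'^(ℓ)‖_F ≤ B_{ΔM} for all ℓ. Set U = B_P (B_W B_J E_Z L_σ + B_{ΔW} B_M + B_W B_{ΔM}). Then for every ℓ ∈ {1,…,L}: ‖J̃^(ℓ) − J^(ℓ)‖_F ≤ (B_P B_W C_σ)^{L−ℓ} L_loss E_H + U Σ_{i=0}^{L−ℓ−1} (B_P B_W C_σ)^i. -/

import Mathlib

open Matrix

attribute [local instance] Matrix.frobeniusNormedAddCommGroup

attribute [local instance] Matrix.frobeniusNormedSpace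

private lemma fro_entry_le {m n : Type*} [Fintype m] [Fintype n]
    (A : Matrix m n ℝ) (i : m) (j : n) : |A i j| ≤ ‖A‖ := by
  rw [Matrix.frobenius_norm_def]
  have h1 : ‖A i j‖ ^ (2:ℝ) ≤ ∑ i', ∑ j', ‖A i' j'‖ ^ (2:ℝ) := by
    calc ‖A i j‖ ^ (2:ℝ) ≤ ∑ j', ‖A i j'‖ ^ (2:ℝ) :=
          Finset.single_le_sum (fun _ _ => Real.rpow_nonneg (norm_nonneg _) _) (Finset.mem_univ j)
      _ ≤ ∑ i', ∑ j', ‖A i' j'‖ ^ (2:ℝ) :=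
          Finset.single_le_sum (fun _ _ => Finset.sum_nonneg fun _ _ => Real.rpow_nonneg (norm_nonneg _) _) (Finset.mem_univ i)
  have h2 : |A i j| = (‖A i j‖ ^ (2:ℝ)) ^ (1/2:ℝ) := by
    rw [← Real.rpow_mul (norm_nonneg _)]
    norm_num [Real.norm_eq_abs]
  rw [h2]
  exact Real.rpow_le_rpow (Real.rpow_nonneg (norm_nonneg _) _) h1 (by norm_num)

private lemma fro_mono {m n : Type*} [Fintype m] [Fintype n]
    (A B : Matrix m n ℝ) (h : ∀ i j, |A i j| ≤ |B i j|) : ‖A‖ ≤ ‖B‖ := by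
  rw [Matrix.frobenius_norm_def, Matrix.frobenius_norm_def]
  refine Real.rpow_le_rpow (Finset.sum_nonneg fun _ _ => Finset.sum_nonneg fun _ _ => Real.rpow_nonneg (norm_nonneg _) _) ?_ (by norm_num)
  refine Finset.sum_le_sum fun i _ => Finset.sum_le_sum fun j _ => ?_
  exact Real.rpow_le_rpow (norm_nonneg _) (by simpa [Real.norm_eq_abs] using h i j) (by norm_num)

private lemma fro_mono_smul {m n : Type*} [Fintype m] [Fintype n]
    (A B : Matrix m n ℝ) (c : ℝ) (hc : 0 ≤ c) (h : ∀ i j, |A i j| ≤ c * |B i j|) :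
    ‖A‖ ≤ c * ‖B‖ := by
  have := fro_mono A (c • B) (fun i j => by
    simpa [Matrix.smul_apply, abs_mul, abs_of_nonneg hc] using h i j)
  simpa [norm_smul, Real.norm_eq_abs, abs_of_nonneg hc] using this

private lemma fro_mul3 {a b c e : Type*} [Fintype a] [Fintype b] [Fintype c] [Fintype e]
    (X : Matrix a b ℝ) (Y : Matrix b c ℝ) (Z : Matrix c e ℝ) (ca cb cc : ℝ)
    (hX : ‖X‖ ≤ ca) (hY : ‖Y‖ ≤ cb) (hZ : ‖Z‖ ≤ cc) (h0a : 0 ≤ ca) (_h0c : 0 ≤ cc) :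
    ‖X * Y * Z‖ ≤ ca * cb * cc := by
  have h0b : 0 ≤ cb := le_trans (norm_nonneg _) hY
  calc ‖X * Y * Z‖ ≤ ‖X * Y‖ * ‖Z‖ := Matrix.frobenius_norm_mul _ _
    _ ≤ (‖X‖ * ‖Y‖) * ‖Z‖ :=
        mul_le_mul_of_nonneg_right (Matrix.frobenius_norm_mul _ _) (norm_nonneg _)
    _ ≤ ca * cb * cc := by
        apply mul_le_mul _ hZ (norm_nonneg _) (mul_nonneg h0a h0b)
        exact mul_le_mul hX hY (norm_nonneg _) h0a

/-- Bounded error between PipeGCN's stale backward pass and the exact backward pass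
computed with the current weights, in Frobenius norm; `τ` plays the role of the
activation derivative `σ'` and `⊙` is the Hadamard product. -/
theorem stmt_12 (L n : ℕ) (hL : 2 ≤ L) (d : ℕ → ℕ)
    (τ : ℝ → ℝ) (Cσ Lσ : ℝ)
    (hτb : ∀ x : ℝ, |τ x| ≤ Cσ)
    (hτl : ∀ x y : ℝ, |τ x - τ y| ≤ Lσ * |x - y|)
    (BP BW BΔW BJ BM BΔM EZ EH Lloss : ℝ)
    (Pin Pbd : Matrix (Fin n) (Fin n) ℝ) (hP : ‖Pin‖ + ‖Pbd‖ ≤ BP)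
    (W W' : (ℓ : ℕ) → Matrix (Fin (d (ℓ - 1))) (Fin (d ℓ)) ℝ)
    (hW : ∀ ℓ, 1 ≤ ℓ → ℓ ≤ L → ‖W ℓ‖ ≤ BW)
    (hW' : ∀ ℓ, 1 ≤ ℓ → ℓ ≤ L → ‖W' ℓ‖ ≤ BW)
    (hΔW : ∀ ℓ, 1 ≤ ℓ → ℓ ≤ L → ‖W ℓ - W' ℓ‖ ≤ BΔW)
    (Z J Zt Jt Mt' : (ℓ : ℕ) → Matrix (Fin n) (Fin (d ℓ)) ℝ)
    (hJ : ∀ ℓ, 2 ≤ ℓ → ℓ ≤ L →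
      J (ℓ - 1) = (Pin + Pbd)ᵀ * (J ℓ ⊙ (Z ℓ).map τ) * (W ℓ)ᵀ)
    (hJt : ∀ ℓ, 2 ≤ ℓ → ℓ ≤ L →
      Jt (ℓ - 1) = Pinᵀ * (Jt ℓ ⊙ (Zt ℓ).map τ) * (W ℓ)ᵀ + Pbdᵀ * Mt' ℓ * (W' ℓ)ᵀ)
    (hJL : ‖Jt L - J L‖ ≤ Lloss * EH)
    (hEZ : ∀ ℓ, 1 ≤ ℓ → ℓ ≤ L → ‖Zt ℓ - Z ℓ‖ ≤ EZ)
    (hJbd : ∀ ℓ, 1 ≤ ℓ → ℓ ≤ L → ‖Jt ℓ‖ ≤ BJ)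
    (hMbd : ∀ ℓ, 1 ≤ ℓ → ℓ ≤ L → ‖Mt' ℓ‖ ≤ BM)
    (hΔM : ∀ ℓ, 1 ≤ ℓ → ℓ ≤ L → ‖Jt ℓ ⊙ (Zt ℓ).map τ - Mt' ℓ‖ ≤ BΔM) :
    ∀ ℓ, 1 ≤ ℓ → ℓ ≤ L →
      ‖Jt ℓ - J ℓ‖ ≤ (BP * BW * Cσ) ^ (L - ℓ) * Lloss * EH
        + BP * (BW * BJ * EZ * Lσ + BΔW * BM + BW * BΔM) *
            ∑ i ∈ Finset.range (L - ℓ), (BP * BW * Cσ) ^ i := by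
  set q : ℝ := BP * BW * Cσ with hq
  set U : ℝ := BP * (BW * BJ * EZ * Lσ + BΔW * BM + BW * BΔM) with hU
  -- nonnegativity facts
  have hBP0 : 0 ≤ BP := le_trans (add_nonneg (norm_nonneg _) (norm_nonneg _)) hP
  have hBW0 : 0 ≤ BW := le_trans (norm_nonneg _) (hW L (by omega) le_rfl)
  have hCσ0 : 0 ≤ Cσ := le_trans (abs_nonneg _) (hτb 0)
  have hLσ0 : 0 ≤ Lσ := by
    have := hτl 0 1
    have h0 : (0:ℝ) ≤ |τ 0 - τ 1| := abs_nonneg _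
    simpa using le_trans h0 (by simpa using this)
  have hq0 : 0 ≤ q := mul_nonneg (mul_nonneg hBP0 hBW0) hCσ0
  have hPbd : ‖Pbd‖ ≤ BP := le_trans (le_add_of_nonneg_left (norm_nonneg _)) hP
  have hPsum : ‖Pin + Pbd‖ ≤ BP := le_trans (norm_add_le _ _) hP
  -- one-step recursion
  have key : ∀ ℓ, 2 ≤ ℓ → ℓ ≤ L →
      ‖Jt (ℓ - 1) - J (ℓ - 1)‖ ≤ q * ‖Jt ℓ - J ℓ‖ + U := by
    intro ℓ h2 hℓ
    have h1 : 1 ≤ ℓ := by omega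
    have hdec : Jt (ℓ - 1) - J (ℓ - 1)
        = (Pin + Pbd)ᵀ * ((Jt ℓ ⊙ (Zt ℓ).map τ) - (J ℓ ⊙ (Z ℓ).map τ)) * (W ℓ)ᵀ
          + Pbdᵀ * Mt' ℓ * (W' ℓ - W ℓ)ᵀ
          + Pbdᵀ * (Mt' ℓ - (Jt ℓ ⊙ (Zt ℓ).map τ)) * (W ℓ)ᵀ := by
      rw [hJt ℓ h2 hℓ, hJ ℓ h2 hℓ]
      simp only [Matrix.transpose_add, Matrix.transpose_sub, Matrix.add_mul,
        Matrix.sub_mul, Matrix.mul_sub, Matrix.mul_add]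
      abel
    -- bound the Hadamard difference
    have hMdiff : ‖(Jt ℓ ⊙ (Zt ℓ).map τ) - (J ℓ ⊙ (Z ℓ).map τ)‖
        ≤ BJ * (Lσ * EZ) + Cσ * ‖Jt ℓ - J ℓ‖ := by
      have hsplit : (Jt ℓ ⊙ (Zt ℓ).map τ) - (J ℓ ⊙ (Z ℓ).map τ)
          = (Jt ℓ ⊙ ((Zt ℓ).map τ - (Z ℓ).map τ)) + ((Jt ℓ - J ℓ) ⊙ (Z ℓ).map τ) := by
        ext i j
        simp [Matrix.hadamard_apply, Matrix.sub_apply, Matrix.add_apply, Matrix.map_apply]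
        ring
      rw [hsplit]
      have hA : ‖Jt ℓ ⊙ ((Zt ℓ).map τ - (Z ℓ).map τ)‖ ≤ BJ * (Lσ * EZ) := by
        have hBJ0 : 0 ≤ BJ := le_trans (norm_nonneg _) (hJbd L (by omega) le_rfl)
        have h1' : ‖Jt ℓ ⊙ ((Zt ℓ).map τ - (Z ℓ).map τ)‖ ≤ BJ * ‖(Zt ℓ).map τ - (Z ℓ).map τ‖ := by
          apply fro_mono_smul _ _ _ hBJ0
          intro i j
          simp only [Matrix.hadamard_apply, abs_mul]
          exact mul_le_mul_of_nonneg_right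
            (le_trans (fro_entry_le (Jt ℓ) i j) (hJbd ℓ h1 hℓ)) (abs_nonneg _)
        have h2' : ‖(Zt ℓ).map τ - (Z ℓ).map τ‖ ≤ Lσ * ‖Zt ℓ - Z ℓ‖ := by
          apply fro_mono_smul _ _ _ hLσ0
          intro i j
          simpa [Matrix.sub_apply, Matrix.map_apply] using hτl (Zt ℓ i j) (Z ℓ i j)
        calc ‖Jt ℓ ⊙ ((Zt ℓ).map τ - (Z ℓ).map τ)‖ ≤ BJ * ‖(Zt ℓ).map τ - (Z ℓ).map τ‖ := h1'
          _ ≤ BJ * (Lσ * ‖Zt ℓ - Z ℓ‖) := mul_le_mul_of_nonneg_left h2' hBJ0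
          _ ≤ BJ * (Lσ * EZ) := by
              apply mul_le_mul_of_nonneg_left _ hBJ0
              exact mul_le_mul_of_nonneg_left (hEZ ℓ h1 hℓ) hLσ0
      have hB : ‖(Jt ℓ - J ℓ) ⊙ (Z ℓ).map τ‖ ≤ Cσ * ‖Jt ℓ - J ℓ‖ := by
        apply fro_mono_smul _ _ _ hCσ0
        intro i j
        simp only [Matrix.hadamard_apply, abs_mul]
        rw [mul_comm]
        exact mul_le_mul_of_nonneg_right
          (by simpa [Matrix.map_apply] using hτb (Z ℓ i j)) (abs_nonneg _)
      calc ‖_ + _‖ ≤ ‖Jt ℓ ⊙ ((Zt ℓ).map τ - (Z ℓ).map τ)‖ + ‖(Jt ℓ - J ℓ) ⊙ (Z ℓ).map τ‖ :=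
            norm_add_le _ _
        _ ≤ BJ * (Lσ * EZ) + Cσ * ‖Jt ℓ - J ℓ‖ := add_le_add hA hB
    -- bound the three terms
    have hT1 : ‖(Pin + Pbd)ᵀ * ((Jt ℓ ⊙ (Zt ℓ).map τ) - (J ℓ ⊙ (Z ℓ).map τ)) * (W ℓ)ᵀ‖
        ≤ BP * (BJ * (Lσ * EZ) + Cσ * ‖Jt ℓ - J ℓ‖) * BW := by
      apply fro_mul3 _ _ _ _ _ _ _ hMdiff _ hBP0 hBW0
      · rw [Matrix.frobenius_norm_transpose]; exact hPsum
      · rw [Matrix.frobenius_norm_transpose]; exact hW ℓ h1 hℓ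
    have hT2 : ‖Pbdᵀ * Mt' ℓ * (W' ℓ - W ℓ)ᵀ‖ ≤ BP * BM * BΔW := by
      have hΔW0 : 0 ≤ BΔW := le_trans (norm_nonneg _) (hΔW L (by omega) le_rfl)
      apply fro_mul3 _ _ _ _ _ _ _ (hMbd ℓ h1 hℓ) _ hBP0 hΔW0
      · rw [Matrix.frobenius_norm_transpose]; exact hPbd
      · rw [Matrix.frobenius_norm_transpose, show W' ℓ - W ℓ = -(W ℓ - W' ℓ) by abel,
          norm_neg]
        exact hΔW ℓ h1 hℓ
    have hT3 : ‖Pbdᵀ * (Mt' ℓ - (Jt ℓ ⊙ (Zt ℓ).map τ)) * (W ℓ)ᵀ‖ ≤ BP * BΔM * BW := by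
      apply fro_mul3 _ _ _ _ _ _ _ _ _ hBP0 hBW0
      · rw [Matrix.frobenius_norm_transpose]; exact hPbd
      · rw [show Mt' ℓ - (Jt ℓ ⊙ (Zt ℓ).map τ) = -(Jt ℓ ⊙ (Zt ℓ).map τ - Mt' ℓ) by abel,
          norm_neg]
        exact hΔM ℓ h1 hℓ
      · rw [Matrix.frobenius_norm_transpose]; exact hW ℓ h1 hℓ
    calc ‖Jt (ℓ - 1) - J (ℓ - 1)‖
        = ‖(Pin + Pbd)ᵀ * ((Jt ℓ ⊙ (Zt ℓ).map τ) - (J ℓ ⊙ (Z ℓ).map τ)) * (W ℓ)ᵀ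
            + Pbdᵀ * Mt' ℓ * (W' ℓ - W ℓ)ᵀ
            + Pbdᵀ * (Mt' ℓ - (Jt ℓ ⊙ (Zt ℓ).map τ)) * (W ℓ)ᵀ‖ := by rw [hdec]
      _ ≤ ‖(Pin + Pbd)ᵀ * ((Jt ℓ ⊙ (Zt ℓ).map τ) - (J ℓ ⊙ (Z ℓ).map τ)) * (W ℓ)ᵀ
            + Pbdᵀ * Mt' ℓ * (W' ℓ - W ℓ)ᵀ‖
          + ‖Pbdᵀ * (Mt' ℓ - (Jt ℓ ⊙ (Zt ℓ).map τ)) * (W ℓ)ᵀ‖ := norm_add_le _ _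
      _ ≤ (‖(Pin + Pbd)ᵀ * ((Jt ℓ ⊙ (Zt ℓ).map τ) - (J ℓ ⊙ (Z ℓ).map τ)) * (W ℓ)ᵀ‖
            + ‖Pbdᵀ * Mt' ℓ * (W' ℓ - W ℓ)ᵀ‖)
          + ‖Pbdᵀ * (Mt' ℓ - (Jt ℓ ⊙ (Zt ℓ).map τ)) * (W ℓ)ᵀ‖ :=
            add_le_add_left (norm_add_le _ _) _
      _ ≤ (BP * (BJ * (Lσ * EZ) + Cσ * ‖Jt ℓ - J ℓ‖) * BW + BP * BM * BΔW)
          + BP * BΔM * BW := add_le_add (add_le_add hT1 hT2) hT3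
      _ = q * ‖Jt ℓ - J ℓ‖ + U := by rw [hq, hU]; ring
  -- downward induction formulated on k = L - ℓ
  have main : ∀ k, k ≤ L - 1 →
      ‖Jt (L - k) - J (L - k)‖ ≤ q ^ k * Lloss * EH + U * ∑ i ∈ Finset.range k, q ^ i := by
    intro k
    induction k with
    | zero => intro _; simpa using hJL
    | succ k ih =>
      intro hk
      have he := ih (by omega)
      have hstep := key (L - k) (by omega) (by omega)
      rw [show L - k - 1 = L - (k + 1) by omega] at hstep
      calc ‖Jt (L - (k+1)) - J (L - (k+1))‖ ≤ q * ‖Jt (L - k) - J (L - k)‖ + U := hstep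
        _ ≤ q * (q ^ k * Lloss * EH + U * ∑ i ∈ Finset.range k, q ^ i) + U :=
            add_le_add_left (mul_le_mul_of_nonneg_left he hq0) _
        _ = q ^ (k+1) * Lloss * EH + U * ∑ i ∈ Finset.range (k+1), q ^ i := by
            rw [geom_sum_succ]; ring
  intro ℓ h1 hℓ
  have := main (L - ℓ) (by omega)
  rw [show L - (L - ℓ) = ℓ by omega] at this
  exact this
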